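/- Let a : Fin n → ℝ, let u : Fin n → Fin n → ℝ be symmetric, and let p : Fin n → ℝ. Assume u satisfies the general heavenly equations: for all i, j, k, l, (a k − a j)(a l − a i) u j k * u i l + (a i − a k)(a l − a j) u i k * u j l + (a j − a i)(a l − a k) u i j * u k l = 0. Then the characteristic equations (a k − a j)(a l − a i)(u j k * p i * p l + u i l * p j * p k) + (a i − a k)(a l − a j)(u i k * p j * p l + u j l * p i * p k) + (a j − a i)(a l − a k)(u i j * p k * p l + u k l * p i * p j) = 0 hold for all i, j, k, l if and only if the skew-symmetric matrix N i j = (a i − a j)(u i j + p i * p j) has rank at most 2. -/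

import Mathlib

open Matrix

lemma rank_submatrix_le' {n m : ℕ} (N : Matrix (Fin n) (Fin n) ℝ) (f g : Fin m → Fin n) :
    (N.submatrix f g).rank ≤ N.rank := by
  have h1 : N.submatrix f g =
      ((1 : Matrix (Fin n) (Fin n) ℝ).submatrix f id) * N
        * ((1 : Matrix (Fin n) (Fin n) ℝ).submatrix id g) := by
    ext r c
    simp [Matrix.mul_apply, Matrix.one_apply, Finset.sum_ite_eq, mul_ite, ite_mul]
  rw [h1]
  exact le_trans (Matrix.rank_mul_le_left _ _) (Matrix.rank_mul_le_right _ _)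

lemma pf_of_rank_le_two {n : ℕ} (N : Matrix (Fin n) (Fin n) ℝ)
    (hs : ∀ i j, N j i = - N i j) (hr : N.rank ≤ 2) (i j k l : Fin n) :
    N i j * N k l - N i k * N j l + N i l * N j k = 0 := by
  have h0 : ∀ i, N i i = 0 := fun i => by have := hs i i; linarith
  set e : Fin 4 → Fin n := ![i, j, k, l] with he
  set M := N.submatrix e e with hM
  have hdet : M.det = (N i j * N k l - N i k * N j l + N i l * N j k) ^ 2 := by
    have hM' : M = !![0, N i j, N i k, N i l; -N i j, 0, N j k, N j l;
        -N i k, -N j k, 0, N k l; -N i l, -N j l, -N k l, 0] := by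
      rw [hM, he]; ext r c; fin_cases r <;> fin_cases c <;> simp [h0, hs i j, hs i k, hs i l, hs j k, hs j l, hs k l]
    rw [hM', Matrix.det_succ_row_zero]
    simp [Fin.sum_univ_succ, Matrix.det_fin_three, Fin.succAbove]
    ring
  by_contra hne
  have hdu : IsUnit M.det := by
    rw [hdet]; exact isUnit_iff_ne_zero.mpr (pow_ne_zero _ hne)
  have h4 : M.rank = 4 := by
    have := Matrix.rank_of_isUnit M ((Matrix.isUnit_iff_isUnit_det M).mpr hdu)
    simpa using this
  have := rank_submatrix_le' N e e
  rw [h4] at this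
  omega

lemma rank_le_two_of_pf {n : ℕ} (N : Matrix (Fin n) (Fin n) ℝ)
    (hpf : ∀ i j k l, N i j * N k l - N i k * N j l + N i l * N j k = 0) :
    N.rank ≤ 2 := by
  by_cases hz : ∀ i j, N i j = 0
  · have : N = 0 := by ext i j; exact hz i j
    rw [this, Matrix.rank_zero]; omega
  · push_neg at hz
    obtain ⟨i0, j0, hc⟩ := hz
    set c := N i0 j0 with hcdef
    set C : Matrix (Fin n) (Fin 2) ℝ :=
      Matrix.of fun i t => if t = 0 then N i0 i / c else -(N j0 i) with hC
    set B : Matrix (Fin 2) (Fin n) ℝ :=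
      Matrix.of fun t j => if t = 0 then N j0 j else N i0 j / c with hB
    have hN : N = C * B := by
      ext k l
      simp only [Matrix.mul_apply, Fin.sum_univ_two, hC, hB, Matrix.of_apply]
      norm_num
      field_simp
      rw [hcdef]
      linear_combination hpf i0 j0 k l
    calc N.rank = (C * B).rank := by rw [hN]
      _ ≤ B.rank := Matrix.rank_mul_le_right _ _
      _ ≤ Fintype.card (Fin 2) := Matrix.rank_le_card_height _
      _ = 2 := by simp



/-- On a solution of the general heavenly system, the characteristic equations
are equivalent to the requirement that the skew-symmetric matrix
`{(a i - a j) * (u i j + p i * p j)}` has rank at most two. -/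
theorem stmt_3 (n : ℕ) (a : Fin n → ℝ) (u : Fin n → Fin n → ℝ) (p : Fin n → ℝ)
    (hu : ∀ i j, u i j = u j i)
    (hgh : ∀ i j k l : Fin n,
        (a k - a j) * (a l - a i) * (u j k * u i l)
        + (a i - a k) * (a l - a j) * (u i k * u j l)
        + (a j - a i) * (a l - a k) * (u i j * u k l) = 0) :
    (∀ i j k l : Fin n,
        (a k - a j) * (a l - a i) * (u j k * p i * p l + u i l * p j * p k)
        + (a i - a k) * (a l - a j) * (u i k * p j * p l + u j l * p i * p k)
        + (a j - a i) * (a l - a k) * (u i j * p k * p l + u k l * p i * p j) = 0)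
      ↔ (Matrix.of fun i j : Fin n => (a i - a j) * (u i j + p i * p j)).rank ≤ 2 := by
  set N : Matrix (Fin n) (Fin n) ℝ :=
    Matrix.of fun i j : Fin n => (a i - a j) * (u i j + p i * p j) with hN
  have hs : ∀ i j, N j i = -N i j := by
    intro i j
    simp only [hN, Matrix.of_apply]
    rw [hu j i]; ring
  have key : ∀ i j k l : Fin n,
      (a k - a j) * (a l - a i) * (u j k * p i * p l + u i l * p j * p k)
        + (a i - a k) * (a l - a j) * (u i k * p j * p l + u j l * p i * p k)
        + (a j - a i) * (a l - a k) * (u i j * p k * p l + u k l * p i * p j)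
      = N i j * N k l - N i k * N j l + N i l * N j k := by
    intro i j k l
    simp only [hN, Matrix.of_apply]
    linear_combination -(hgh i j k l)
  constructor
  · intro h
    apply rank_le_two_of_pf
    intro i j k l
    rw [← key i j k l]
    exact h i j k l
  · intro h i j k l
    rw [key i j k l]
    exact pf_of_rank_le_two N hs h i j k l
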